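/- (Corollary 1) The FIE is RGAS if: (a) the system x⁺ = f(x,w), y = h(x) + v is i-IOSS; (b) the FIE cost V_t satisfies Assumption 1 and its infimum is attainable at each time t (so V_t(x̂(0|t) − x̄₀, ŵ_t) ≤ V_t(x₀ − x̄₀, w)); and (c) the KL-function β of the i-IOSS property and ρ̲ₓ, ρₓ of Assumption 1 are K·L-functions of the form β(s,t) = μ₁(s)·φ₁(t), ρ̲ₓ(s,t) = μ₂(s)·φ₂(t), ρₓ(s,t) = μ₃(s)·φ₂(t), where μ₁, μ₂, μ₃ are K-functions with μ₂ a K∞-function, φ₁, φ₂ are L-functions with φ₂(t) > 0 for all t, and for every K-function π there exists a K-function π′ such that μ₁(4·μ₂⁻¹(π(s)/φ₂(t)))·φ₁(t) ≤ π′(s) for all s, t ≥ 0. -/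

import Mathlib

open Filter Topology

/-- A K-function: continuous on [0,∞), strictly increasing on [0,∞), zero at zero. -/
def IsKFun (α : ℝ → ℝ) : Prop :=
  ContinuousOn α (Set.Ici 0) ∧ StrictMonoOn α (Set.Ici 0) ∧ α 0 = 0

/-- A K∞-function: a K-function tending to ∞ at ∞. -/
def IsKInftyFun (α : ℝ → ℝ) : Prop :=
  IsKFun α ∧ Tendsto α atTop atTop

/-- An L-function: continuous on [0,∞), nonincreasing on [0,∞), tending to 0 at ∞. -/
def IsLFun (φ : ℝ → ℝ) : Prop :=
  ContinuousOn φ (Set.Ici 0) ∧ AntitoneOn φ (Set.Ici 0) ∧ Tendsto φ atTop (𝓝 0)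

/-- A KL-function. -/
def IsKLFun (β : ℝ → ℝ → ℝ) : Prop :=
  (∀ t, 0 ≤ t → IsKFun fun s => β s t) ∧ (∀ s, 0 ≤ s → IsLFun fun t => β s t)

/-- Solution of the discrete-time system `x⁺ = f(x,w)`. -/
def traj {X W : Type*} (f : X → W → X) (x0 : X) (w : ℕ → W) : ℕ → X
  | 0 => x0
  | t + 1 => f (traj f x0 w t) (w t)

/-- `seqSup z m = max_{0 ≤ i < m} ‖z i‖` (0 when the index range is empty), so
`‖z‖_{0:t-1} = seqSup z t` and `‖z‖_{0:t} = seqSup z (t+1)`. -/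
noncomputable def seqSup {E : Type*} [SeminormedAddGroup E] (z : ℕ → E) (m : ℕ) : ℝ :=
  (((Finset.range m).sup fun i => ‖z i‖₊ : NNReal) : ℝ)

/-! ### Auxiliary lemmas -/

/-- "Global K-function": continuous and strictly increasing on all of ℝ, zero at zero. -/
def GKFun (F : ℝ → ℝ) : Prop := Continuous F ∧ StrictMono F ∧ F 0 = 0

theorem GKFun.mono {F : ℝ → ℝ} (h : GKFun F) : Monotone F := h.2.1.monotone

theorem GKFun.nonneg {F : ℝ → ℝ} (h : GKFun F) {s : ℝ} (hs : 0 ≤ s) : 0 ≤ F s :=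
  h.2.2 ▸ h.mono hs

theorem GKFun.isKFun {F : ℝ → ℝ} (h : GKFun F) : IsKFun F :=
  ⟨h.1.continuousOn, h.2.1.strictMonoOn _, h.2.2⟩

theorem GKFun.comp {F G : ℝ → ℝ} (hF : GKFun F) (hG : GKFun G) : GKFun fun s => F (G s) :=
  ⟨hF.1.comp hG.1, hF.2.1.comp hG.2.1, by simp only [hG.2.2, hF.2.2]⟩

theorem GKFun.add {F G : ℝ → ℝ} (hF : GKFun F) (hG : GKFun G) : GKFun fun s => F s + G s :=
  ⟨hF.1.add hG.1, fun a b hab => add_lt_add (hF.2.1 hab) (hG.2.1 hab),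
    by simp only [hF.2.2, hG.2.2, add_zero]⟩

theorem GKFun.cmul {c : ℝ} (hc : 0 < c) : GKFun fun s => c * s :=
  ⟨continuous_const.mul continuous_id, fun a b hab => by exact (mul_lt_mul_iff_right₀ hc).mpr hab,
    mul_zero c⟩

theorem GKFun.mulc {F : ℝ → ℝ} (hF : GKFun F) {c : ℝ} (hc : 0 < c) : GKFun fun s => F s * c :=
  ⟨hF.1.mul continuous_const, fun a b hab => (mul_lt_mul_iff_left₀ hc).mpr (hF.2.1 hab),
    by simp only [hF.2.2, zero_mul]⟩

theorem IsKFun.knonneg {α : ℝ → ℝ} (h : IsKFun α) {s : ℝ} (hs : 0 ≤ s) : 0 ≤ α s := by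
  rcases eq_or_lt_of_le hs with hrfl | hs'
  · rw [← hrfl, h.2.2]
  · have := h.2.1 Set.self_mem_Ici (Set.mem_Ici.mpr hs) hs'
    rw [h.2.2] at this; exact this.le

theorem IsKFun.kadd {α β : ℝ → ℝ} (hα : IsKFun α) (hβ : IsKFun β) :
    IsKFun fun s => α s + β s :=
  ⟨hα.1.add hβ.1, fun a ha b hb hab => add_lt_add (hα.2.1 ha hb hab) (hβ.2.1 ha hb hab),
    by simp only [hα.2.2, hβ.2.2, add_zero]⟩

theorem IsKFun.kcmul {c : ℝ} (hc : 0 < c) {α : ℝ → ℝ} (hα : IsKFun α) :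
    IsKFun fun s => c * α s :=
  ⟨continuousOn_const.mul hα.1,
    fun a ha b hb hab => (mul_lt_mul_iff_right₀ hc).mpr (hα.2.1 ha hb hab),
    by simp only [hα.2.2, mul_zero]⟩

/-- Extension of a K-function to a global K-function. -/
theorem IsKFun.toGK {α : ℝ → ℝ} (hα : IsKFun α) :
    ∃ F : ℝ → ℝ, GKFun F ∧ (∀ s, 0 ≤ s → F s = α s) ∧ (∀ s, s ≤ 0 → F s = s) := by
  refine ⟨fun s => α (max s 0) + min s 0, ⟨?_, ?_, ?_⟩, ?_, ?_⟩
  · exact (hα.1.comp_continuous (continuous_id.max continuous_const)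
      fun s => Set.mem_Ici.mpr (le_max_right s 0)).add (continuous_id.min continuous_const)
  · intro a b hab
    show α (max a 0) + min a 0 < α (max b 0) + min b 0
    rcases le_or_gt b 0 with hb | hb
    · have h1 : min a 0 < min b 0 := by
        rw [min_eq_left (hab.le.trans hb), min_eq_left hb]; exact hab
      have h2 : α (max a 0) ≤ α (max b 0) :=
        hα.2.1.monotoneOn (Set.mem_Ici.mpr (le_max_right a 0))
          (Set.mem_Ici.mpr (le_max_right b 0)) (max_le_max hab.le le_rfl)
      linarith
    · have h1 : α (max a 0) < α (max b 0) := by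
        apply hα.2.1 (Set.mem_Ici.mpr (le_max_right a 0)) (Set.mem_Ici.mpr (le_max_right b 0))
        rw [max_eq_left hb.le]
        exact max_lt hab hb
      have h2 : min a 0 ≤ min b 0 := min_le_min hab.le le_rfl
      linarith
  · simp [hα.2.2]
  · intro s hs
    simp only [max_eq_left hs, min_eq_right hs, hα.2.2, add_zero]
  · intro s hs
    simp only [max_eq_right hs, min_eq_left hs, hα.2.2, zero_add]

/-- Inverse of a surjective global K-function. -/
theorem gk_inverse {F : ℝ → ℝ} (hF : GKFun F) (htop : Tendsto F atTop atTop)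
    (hbot : Tendsto F atBot atBot) :
    ∃ G : ℝ → ℝ, GKFun G ∧ (∀ s, G (F s) = s) ∧ ∀ r, F (G r) = r := by
  have hsurj : Function.Surjective F := Continuous.surjective hF.1 htop hbot
  let e := StrictMono.orderIsoOfSurjective F hF.2.1 hsurj
  have he : ∀ s, e s = F s := fun s => rfl
  refine ⟨e.symm, ⟨e.symm.continuous, e.symm.strictMono, ?_⟩, fun s => ?_, fun r => ?_⟩
  · have : e.symm (F 0) = 0 := by rw [← he 0]; exact e.symm_apply_apply 0
    rwa [hF.2.2] at this
  · rw [← he s]; exact e.symm_apply_apply s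
  · rw [← he (e.symm r)]; exact e.apply_symm_apply r

/-- A K∞-function has a globally defined inverse which is a global K-function. -/
theorem kinf_inverse {γ : ℝ → ℝ} (hγ : IsKInftyFun γ) :
    ∃ Γ Γi : ℝ → ℝ, GKFun Γ ∧ GKFun Γi ∧ (∀ s, 0 ≤ s → Γ s = γ s) ∧
      (∀ s, Γi (Γ s) = s) ∧ ∀ r, Γ (Γi r) = r := by
  obtain ⟨F, hF, heq, hneg⟩ := hγ.1.toGK
  have htop : Tendsto F atTop atTop := by
    refine hγ.2.congr' ?_
    filter_upwards [eventually_ge_atTop (0 : ℝ)] with s hs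
    exact (heq s hs).symm
  have hbot : Tendsto F atBot atBot := by
    refine tendsto_id.congr' ?_
    filter_upwards [eventually_le_atBot (0 : ℝ)] with s hs
    exact (hneg s hs).symm
  obtain ⟨G, hG, h1, h2⟩ := gk_inverse hF htop hbot
  exact ⟨F, G, hF, hG, heq, h1, h2⟩

theorem gk_two {F : ℝ → ℝ} (hF : GKFun F) {a b : ℝ} (ha : 0 ≤ a) (hb : 0 ≤ b) :
    F (a + b) ≤ F (2 * a) + F (2 * b) := by
  rcases le_total a b with hc | hc
  · have h1 : F (a + b) ≤ F (2 * b) := hF.mono (by linarith)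
    have h2 : (0 : ℝ) ≤ F (2 * a) := hF.nonneg (by linarith)
    linarith
  · have h1 : F (a + b) ≤ F (2 * a) := hF.mono (by linarith)
    have h2 : (0 : ℝ) ≤ F (2 * b) := hF.nonneg (by linarith)
    linarith

theorem gk_three {F : ℝ → ℝ} (hF : GKFun F) {a b c : ℝ} (ha : 0 ≤ a) (hb : 0 ≤ b)
    (hc : 0 ≤ c) : F (a + b + c) ≤ F (3 * a) + F (3 * b) + F (3 * c) := by
  have h1 : (0 : ℝ) ≤ F (3 * a) := hF.nonneg (by linarith)
  have h2 : (0 : ℝ) ≤ F (3 * b) := hF.nonneg (by linarith)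
  have h3 : (0 : ℝ) ≤ F (3 * c) := hF.nonneg (by linarith)
  have key : a + b + c ≤ 3 * a ∨ a + b + c ≤ 3 * b ∨ a + b + c ≤ 3 * c := by
    rcases le_total a b with hx | hx
    · rcases le_total b c with hy | hy
      · right; right; linarith
      · right; left; linarith
    · rcases le_total a c with hy | hy
      · right; right; linarith
      · left; linarith
  rcases key with hk | hk | hk
  · have := hF.mono hk; linarith
  · have := hF.mono hk; linarith
  · have := hF.mono hk; linarith

theorem seqSup_nonneg {E : Type*} [SeminormedAddGroup E] (z : ℕ → E) (m : ℕ) :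
    0 ≤ seqSup z m := NNReal.coe_nonneg _

theorem seqSup_le {E : Type*} [SeminormedAddGroup E] {z : ℕ → E} {m : ℕ} {C : ℝ}
    (hC : 0 ≤ C) (hb : ∀ i, i < m → ‖z i‖ ≤ C) : seqSup z m ≤ C := by
  have key : (((Finset.range m).sup fun i => ‖z i‖₊ : NNReal)) ≤ C.toNNReal := by
    apply Finset.sup_le
    intro i hi
    rw [← NNReal.coe_le_coe, Real.coe_toNNReal C hC, coe_nnnorm]
    exact hb i (Finset.mem_range.mp hi)
  calc seqSup z m ≤ ((C.toNNReal : NNReal) : ℝ) := NNReal.coe_le_coe.mpr key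
    _ = C := Real.coe_toNNReal C hC

theorem le_seqSup {E : Type*} [SeminormedAddGroup E] (z : ℕ → E) {i m : ℕ} (hi : i < m) :
    ‖z i‖ ≤ seqSup z m := by
  rw [seqSup, ← coe_nnnorm, NNReal.coe_le_coe]
  exact Finset.le_sup (f := fun i => ‖z i‖₊) (Finset.mem_range.mpr hi)

theorem seqSup_sub_le {E : Type*} [SeminormedAddGroup E] (z1 z2 : ℕ → E) (m : ℕ) :
    seqSup (fun i => z1 i - z2 i) m ≤ seqSup z1 m + seqSup z2 m :=
  seqSup_le (add_nonneg (seqSup_nonneg _ _) (seqSup_nonneg _ _)) fun i hi =>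
    (norm_sub_le _ _).trans (add_le_add (le_seqSup _ hi) (le_seqSup _ hi))

theorem IsLFun.lnonneg {φ : ℝ → ℝ} (h : IsLFun φ) {t : ℝ} (ht : 0 ≤ t) : 0 ≤ φ t := by
  refine le_of_tendsto h.2.2 ?_
  filter_upwards [eventually_ge_atTop t, eventually_ge_atTop (0 : ℝ)] with u hu h0
  exact h.2.1 (Set.mem_Ici.mpr ht) (Set.mem_Ici.mpr h0) hu

theorem phi_pos {μ φ : ℝ → ℝ} (hμ : IsKFun μ) (hkl : IsKLFun fun s t => μ s * φ t)
    {t : ℝ} (ht : 0 ≤ t) : 0 < φ t := by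
  have hμ1 : 0 < μ 1 := by
    have := hμ.2.1 Set.self_mem_Ici (Set.mem_Ici.mpr zero_le_one) one_pos
    rwa [hμ.2.2] at this
  have hK := hkl.1 t ht
  have h' : μ 0 * φ t < μ 1 * φ t :=
    hK.2.1 Set.self_mem_Ici (Set.mem_Ici.mpr zero_le_one) one_pos
  have h0 : μ 0 * φ t = 0 := hK.2.2
  nlinarith
/-- (Corollary 1.)  The FIE is RGAS if the system is i-IOSS, the cost satisfies
Assumption 1, its infimum is attainable, and the bounds β, ρ̲ₓ, ρₓ are
K·L-functions `μ₁(s)φ₁(t)`, `μ₂(s)φ₂(t)`, `μ₃(s)φ₂(t)` satisfying the key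
sensitivity condition. -/
theorem fie_rgas_of_KdotL_bounds
    (n g p : ℕ)
    (f : EuclideanSpace ℝ (Fin n) → EuclideanSpace ℝ (Fin g) → EuclideanSpace ℝ (Fin n))
    (h : EuclideanSpace ℝ (Fin n) → EuclideanSpace ℝ (Fin p))
    (hf : Continuous fun q : EuclideanSpace ℝ (Fin n) × EuclideanSpace ℝ (Fin g) => f q.1 q.2)
    (hh : Continuous h)
    -- the K·L comparison functions of condition (c)
    (μ₁ μ₂ μ₃ : ℝ → ℝ) (φ₁ φ₂ : ℝ → ℝ)
    (hμ₁ : IsKFun μ₁) (hμ₂ : IsKInftyFun μ₂) (hμ₃ : IsKFun μ₃)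
    (hφ₁ : IsLFun φ₁) (hφ₂ : IsLFun φ₂) (hφ₂pos : ∀ t : ℝ, 0 ≤ t → 0 < φ₂ t)
    (hβKL : IsKLFun fun s t => μ₁ s * φ₁ t)
    (hρₗKL : IsKLFun fun s t => μ₂ s * φ₂ t)
    (hρᵤKL : IsKLFun fun s t => μ₃ s * φ₂ t)
    (hρₗKinf : ∀ t : ℝ, 0 ≤ t → IsKInftyFun fun s => μ₂ s * φ₂ t)
    -- (a) i-IOSS of the system with KL-function β(s,t) = μ₁(s)·φ₁(t)
    (α₁ α₂ : ℝ → ℝ) (hα₁ : IsKFun α₁) (hα₂ : IsKFun α₂)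
    (hIOSS : ∀ (x01 x02 : EuclideanSpace ℝ (Fin n)) (w1 w2 : ℕ → EuclideanSpace ℝ (Fin g))
      (t : ℕ),
      ‖traj f x01 w1 t - traj f x02 w2 t‖ ≤
        μ₁ ‖x01 - x02‖ * φ₁ t + α₁ (seqSup (fun i => w1 i - w2 i) t)
          + α₂ (seqSup (fun i => h (traj f x01 w1 i) - h (traj f x02 w2 i)) (t + 1)))
    -- remaining comparison functions of Assumption 1
    (γₗw γₗv γᵤw γᵤv : ℝ → ℝ)
    (hγₗw : IsKInftyFun γₗw) (hγₗv : IsKInftyFun γₗv)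
    (hγᵤw : IsKInftyFun γᵤw) (hγᵤv : IsKInftyFun γᵤv)
    -- μ₂⁻¹ : the inverse on [0,∞) of μ₂
    (μ₂inv : ℝ → ℝ)
    (hμ₂inv₁ : ∀ s : ℝ, 0 ≤ s → μ₂inv (μ₂ s) = s)
    (hμ₂inv₂ : ∀ r : ℝ, 0 ≤ r → μ₂ (μ₂inv r) = r ∧ 0 ≤ μ₂inv r)
    -- (c) the key sensitivity condition
    (hkey : ∀ π : ℝ → ℝ, IsKFun π → ∃ π' : ℝ → ℝ, IsKFun π' ∧
      ∀ s t : ℝ, 0 ≤ s → 0 ≤ t → μ₁ (4 * μ₂inv (π s / φ₂ t)) * φ₁ t ≤ π' s) :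
    -- RGAS of the FIE
    ∃ βx : ℝ → ℝ → ℝ, ∃ αw αv : ℝ → ℝ, IsKLFun βx ∧ IsKFun αw ∧ IsKFun αv ∧
      ∀ (x0 xbar0 : EuclideanSpace ℝ (Fin n)) (w : ℕ → EuclideanSpace ℝ (Fin g))
        (v : ℕ → EuclideanSpace ℝ (Fin p)),
        (∃ Mw : ℝ, ∀ i, ‖w i‖ ≤ Mw) → (∃ Mv : ℝ, ∀ i, ‖v i‖ ≤ Mv) →
        ∀ (V : ℕ → EuclideanSpace ℝ (Fin n) → (ℕ → EuclideanSpace ℝ (Fin g)) → ℝ)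
          (xhat0 : ℕ → EuclideanSpace ℝ (Fin n)) (what : ℕ → ℕ → EuclideanSpace ℝ (Fin g)),
          -- (b) Assumption 1 with ρ̲ₓ(s,t) = μ₂(s)φ₂(t) and ρₓ(s,t) = μ₃(s)φ₂(t),
          -- the fitted noise of a candidate (χ0, ω) being
          -- ν(i) = h(x(i; x0, w)) + v(i) - h(x(i; χ0, ω))
          (∀ (t : ℕ) (χ0 : EuclideanSpace ℝ (Fin n)) (ω : ℕ → EuclideanSpace ℝ (Fin g)),
            μ₂ ‖χ0 - xbar0‖ * φ₂ t + γₗw (seqSup ω t)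
              + γₗv (seqSup
                  (fun i => (h (traj f x0 w i) + v i) - h (traj f χ0 ω i)) (t + 1))
              ≤ V t χ0 ω ∧
            V t χ0 ω ≤ μ₃ ‖χ0 - xbar0‖ * φ₂ t + γᵤw (seqSup ω t)
              + γᵤv (seqSup
                  (fun i => (h (traj f x0 w i) + v i) - h (traj f χ0 ω i)) (t + 1))) →
          -- (b) the infimum is attainable: optimality of (xhat0 t, what t)
          (∀ t : ℕ, V t (xhat0 t) (what t) ≤ V t x0 w) →
          ∀ t : ℕ,
            ‖traj f x0 w t - traj f (xhat0 t) (what t) t‖ ≤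
              βx ‖x0 - xbar0‖ t + αw (seqSup w t) + αv (seqSup v (t + 1)) := by
  classical
  obtain ⟨Mu1, hMu1, hMu1e, -⟩ := hμ₁.toGK
  obtain ⟨Mu3, hMu3, hMu3e, -⟩ := hμ₃.toGK
  obtain ⟨A1, hA1, hA1e, -⟩ := hα₁.toGK
  obtain ⟨A2, hA2, hA2e, -⟩ := hα₂.toGK
  obtain ⟨Guw, hGuw, hGuwe, -⟩ := hγᵤw.1.toGK
  obtain ⟨Guv, hGuv, hGuve, -⟩ := hγᵤv.1.toGK
  obtain ⟨Glw, GlwI, hGlw, hGlwI, hGlwe, hGlw1, hGlw2⟩ := kinf_inverse hγₗw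
  obtain ⟨Glv, GlvI, hGlv, hGlvI, hGlve, hGlv1, hGlv2⟩ := kinf_inverse hγₗv
  obtain ⟨Mu2, Mu2I, hMu2, hMu2I, hMu2e, hMu21, hMu22⟩ := kinf_inverse hμ₂
  -- `Mu2I` agrees with `μ₂inv` on nonnegative arguments
  have hM2agree : ∀ r : ℝ, 0 ≤ r → Mu2I r = μ₂inv r := by
    intro r hr
    have h1 := (hμ₂inv₂ r hr).1
    have h2 := (hμ₂inv₂ r hr).2
    have h3 : Mu2 (μ₂inv r) = r := by rw [hMu2e _ h2, h1]
    have h4 := congrArg Mu2I h3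
    rw [hMu21] at h4
    exact h4.symm
  -- the key-condition comparison functions
  have hπw : IsKFun fun s => 4 * γᵤw s := IsKFun.kcmul (by norm_num) hγᵤw.1
  have hπv : IsKFun fun s => 4 * γᵤv s := IsKFun.kcmul (by norm_num) hγᵤv.1
  obtain ⟨Pw, hPwK, hPw⟩ := hkey _ hπw
  obtain ⟨Pv, hPvK, hPv⟩ := hkey _ hπv
  have hφ₁pos : ∀ t : ℝ, 0 ≤ t → 0 < φ₁ t := fun t ht => phi_pos hμ₁ hβKL ht
  refine ⟨fun s t => (Mu1 (2*s) + Mu1 (4 * Mu2I (2 * Mu3 s))) * φ₁ t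
      + A1 (6 * GlwI (3 * (Mu3 s * φ₂ t))) + A2 (6 * GlvI (3 * (Mu3 s * φ₂ t))),
    fun s => Pw s + A1 (2*s) + A1 (6 * GlwI (3 * Guw s)) + A2 (6 * GlvI (3 * Guw s)),
    fun s => Pv s + A2 (2*s) + A1 (6 * GlwI (3 * Guv s)) + A2 (6 * GlvI (3 * Guv s)),
    ⟨?_, ?_⟩, ?_, ?_, ?_⟩
  · -- βx is a K-function in its first argument
    intro t ht
    have hp1 : GKFun fun s => Mu1 (2*s) := hMu1.comp (GKFun.cmul (by norm_num))
    have hp2 : GKFun fun s => Mu1 (4 * Mu2I (2 * Mu3 s)) :=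
      hMu1.comp ((GKFun.cmul (by norm_num)).comp
        (hMu2I.comp ((GKFun.cmul (by norm_num)).comp hMu3)))
    have hp3 : GKFun fun s => A1 (6 * GlwI (3 * (Mu3 s * φ₂ t))) :=
      hA1.comp ((GKFun.cmul (by norm_num)).comp (hGlwI.comp
        ((GKFun.cmul (by norm_num)).comp (hMu3.mulc (hφ₂pos t ht)))))
    have hp4 : GKFun fun s => A2 (6 * GlvI (3 * (Mu3 s * φ₂ t))) :=
      hA2.comp ((GKFun.cmul (by norm_num)).comp (hGlvI.comp
        ((GKFun.cmul (by norm_num)).comp (hMu3.mulc (hφ₂pos t ht)))))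
    exact ((((hp1.add hp2).mulc (hφ₁pos t ht)).add hp3).add hp4).isKFun
  · -- βx is an L-function in its second argument
    intro s hs
    have hMu3s : 0 ≤ Mu3 s := hMu3.nonneg hs
    have hCnn : 0 ≤ Mu1 (2*s) + Mu1 (4 * Mu2I (2 * Mu3 s)) :=
      add_nonneg (hMu1.nonneg (by linarith)) (hMu1.nonneg (by
        have := hMu2I.nonneg (show (0:ℝ) ≤ 2 * Mu3 s by linarith); linarith))
    have hout1 : Continuous fun r : ℝ => A1 (6 * GlwI (3 * (Mu3 s * r))) :=
      hA1.1.comp (continuous_const.mul (hGlwI.1.comp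
        (continuous_const.mul (continuous_const.mul continuous_id))))
    have hout2 : Continuous fun r : ℝ => A2 (6 * GlvI (3 * (Mu3 s * r))) :=
      hA2.1.comp (continuous_const.mul (hGlvI.1.comp
        (continuous_const.mul (continuous_const.mul continuous_id))))
    refine ⟨?_, ?_, ?_⟩
    · exact ((continuousOn_const.mul hφ₁.1).add
        (hout1.comp_continuousOn hφ₂.1)).add (hout2.comp_continuousOn hφ₂.1)
    · intro t1 h1 t2 h2 h12
      have hq2 : φ₂ t2 ≤ φ₂ t1 := hφ₂.2.1 h1 h2 h12
      have hq1 : φ₁ t2 ≤ φ₁ t1 := hφ₁.2.1 h1 h2 h12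
      have m1 : (Mu1 (2*s) + Mu1 (4 * Mu2I (2 * Mu3 s))) * φ₁ t2 ≤
          (Mu1 (2*s) + Mu1 (4 * Mu2I (2 * Mu3 s))) * φ₁ t1 :=
        mul_le_mul_of_nonneg_left hq1 hCnn
      have m2 : A1 (6 * GlwI (3 * (Mu3 s * φ₂ t2))) ≤ A1 (6 * GlwI (3 * (Mu3 s * φ₂ t1))) := by
        apply hA1.mono
        have := hGlwI.mono (show 3 * (Mu3 s * φ₂ t2) ≤ 3 * (Mu3 s * φ₂ t1) by nlinarith)
        linarith
      have m3 : A2 (6 * GlvI (3 * (Mu3 s * φ₂ t2))) ≤ A2 (6 * GlvI (3 * (Mu3 s * φ₂ t1))) := by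
        apply hA2.mono
        have := hGlvI.mono (show 3 * (Mu3 s * φ₂ t2) ≤ 3 * (Mu3 s * φ₂ t1) by nlinarith)
        linarith
      exact add_le_add (add_le_add m1 m2) m3
    · have T1 : Tendsto (fun t => (Mu1 (2*s) + Mu1 (4 * Mu2I (2 * Mu3 s))) * φ₁ t)
          atTop (𝓝 0) := by
        simpa using hφ₁.2.2.const_mul (Mu1 (2*s) + Mu1 (4 * Mu2I (2 * Mu3 s)))
      have h01 : Tendsto (fun r : ℝ => A1 (6 * GlwI (3 * (Mu3 s * r)))) (𝓝 0) (𝓝 0) := by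
        have hc := hout1.tendsto 0
        simpa [hGlwI.2.2, hA1.2.2] using hc
      have h02 : Tendsto (fun r : ℝ => A2 (6 * GlvI (3 * (Mu3 s * r)))) (𝓝 0) (𝓝 0) := by
        have hc := hout2.tendsto 0
        simpa [hGlvI.2.2, hA2.2.2] using hc
      have T2 := h01.comp hφ₂.2.2
      have T3 := h02.comp hφ₂.2.2
      have := (T1.add T2).add T3
      simpa using this
  · -- αw is a K-function
    exact ((hPwK.kadd (hA1.comp (GKFun.cmul (by norm_num))).isKFun).kadd
      (hA1.comp ((GKFun.cmul (by norm_num)).comp (hGlwI.comp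
        ((GKFun.cmul (by norm_num)).comp hGuw)))).isKFun).kadd
      (hA2.comp ((GKFun.cmul (by norm_num)).comp (hGlvI.comp
        ((GKFun.cmul (by norm_num)).comp hGuw)))).isKFun
  · -- αv is a K-function
    exact ((hPvK.kadd (hA2.comp (GKFun.cmul (by norm_num))).isKFun).kadd
      (hA1.comp ((GKFun.cmul (by norm_num)).comp (hGlwI.comp
        ((GKFun.cmul (by norm_num)).comp hGuv)))).isKFun).kadd
      (hA2.comp ((GKFun.cmul (by norm_num)).comp (hGlvI.comp
        ((GKFun.cmul (by norm_num)).comp hGuv)))).isKFun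
  · -- the RGAS estimate
    intro x0 xbar0 w v _ _ V xhat0 what hV hopt t
    -- the purely arithmetic core
    have key : ∀ s0 D sw sv Sw Sv Δ W Y E tR : ℝ,
        0 ≤ s0 → 0 ≤ D → 0 ≤ sw → 0 ≤ sv → 0 ≤ Sw → 0 ≤ Sv → 0 ≤ Δ → 0 ≤ W → 0 ≤ Y →
        0 ≤ tR →
        μ₂ D * φ₂ tR + γₗw Sw + γₗv Sv ≤ μ₃ s0 * φ₂ tR + γᵤw sw + γᵤv sv →
        Δ ≤ s0 + D → W ≤ sw + Sw → Y ≤ Sv + sv →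
        E ≤ μ₁ Δ * φ₁ tR + α₁ W + α₂ Y →
        E ≤ (Mu1 (2*s0) + Mu1 (4 * Mu2I (2 * Mu3 s0))) * φ₁ tR
              + A1 (6 * GlwI (3 * (Mu3 s0 * φ₂ tR))) + A2 (6 * GlvI (3 * (Mu3 s0 * φ₂ tR)))
            + (Pw sw + A1 (2*sw) + A1 (6 * GlwI (3 * Guw sw)) + A2 (6 * GlvI (3 * Guw sw)))
            + (Pv sv + A2 (2*sv) + A1 (6 * GlwI (3 * Guv sv)) + A2 (6 * GlvI (3 * Guv sv))) := by
      intro s0 D sw sv Sw Sv Δ W Y E tR hs0 hD hsw hsv hSw hSv hΔnn hWnn hYnn htR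
        hR hΔ hW hY hE
      have hφ₂t : 0 < φ₂ tR := hφ₂pos tR htR
      have hφ₁t : 0 ≤ φ₁ tR := (hφ₁pos tR htR).le
      have hm2D : 0 ≤ μ₂ D := hμ₂.1.knonneg hD
      have hm3 : 0 ≤ μ₃ s0 := hμ₃.knonneg hs0
      have hguw : 0 ≤ γᵤw sw := hγᵤw.1.knonneg hsw
      have hguv : 0 ≤ γᵤv sv := hγᵤv.1.knonneg hsv
      have hglw : 0 ≤ γₗw Sw := hγₗw.1.knonneg hSw
      have hglv : 0 ≤ γₗv Sv := hγₗv.1.knonneg hSv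
      have hm2φ : 0 ≤ μ₂ D * φ₂ tR := mul_nonneg hm2D hφ₂t.le
      set R := μ₃ s0 * φ₂ tR + γᵤw sw + γᵤv sv with hRdef
      have e1 : μ₂ D * φ₂ tR ≤ R := by linarith
      have e2 : γₗw Sw ≤ R := by linarith
      have e3 : γₗv Sv ≤ R := by linarith
      have hRnn : 0 ≤ R := le_trans hglw e2
      have hMu3nn : 0 ≤ Mu3 s0 := hMu3.nonneg hs0
      have hGuwnn : 0 ≤ Guw sw := hGuw.nonneg hsw
      have hGuvnn : 0 ≤ Guv sv := hGuv.nonneg hsv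
      have hR' : R = Mu3 s0 * φ₂ tR + Guw sw + Guv sv := by
        rw [hMu3e s0 hs0, hGuwe sw hsw, hGuve sv hsv]
      -- bounds on the estimator quantities
      have hDle : D ≤ Mu2I (R / φ₂ tR) := by
        have h1 : μ₂ D ≤ R / φ₂ tR := (le_div_iff₀ hφ₂t).mpr e1
        have h2 : Mu2 D ≤ R / φ₂ tR := by rwa [hMu2e D hD]
        have h3 := hMu2I.mono h2
        rwa [hMu21 D] at h3
      have hSwle : Sw ≤ GlwI R := by
        have h2 : Glw Sw ≤ R := by rwa [hGlwe Sw hSw]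
        have h3 := hGlwI.mono h2
        rwa [hGlw1 Sw] at h3
      have hSvle : Sv ≤ GlvI R := by
        have h2 : Glv Sv ≤ R := by rwa [hGlve Sv hSv]
        have h3 := hGlvI.mono h2
        rwa [hGlv1 Sv] at h3
      -- division identity
      have hbnn : 0 ≤ (γᵤw sw + γᵤv sv) / φ₂ tR := div_nonneg (by linarith) hφ₂t.le
      have hRdiv : R / φ₂ tR = Mu3 s0 + (γᵤw sw + γᵤv sv) / φ₂ tR := by
        rw [hMu3e s0 hs0, hRdef]
        field_simp
        ring
      -- Term 1 (the initial-state term)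
      have hXnn : 0 ≤ Mu2I (2 * Mu3 s0) := hMu2I.nonneg (by linarith)
      have hYnn2 : 0 ≤ Mu2I (2 * ((γᵤw sw + γᵤv sv) / φ₂ tR)) := hMu2I.nonneg (by linarith)
      have c1 : Mu1 Δ ≤ Mu1 (2*s0) + Mu1 (2*D) :=
        le_trans (hMu1.mono hΔ) (gk_two hMu1 hs0 hD)
      have c2 : D ≤ Mu2I (2 * Mu3 s0) + Mu2I (2 * ((γᵤw sw + γᵤv sv) / φ₂ tR)) := by
        have s2 := gk_two hMu2I hMu3nn hbnn
        have s1 : D ≤ Mu2I (Mu3 s0 + (γᵤw sw + γᵤv sv) / φ₂ tR) := by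
          rw [← hRdiv]; exact hDle
        linarith
      have c3 : Mu1 (2*D) ≤ Mu1 (4 * Mu2I (2 * Mu3 s0))
          + Mu1 (4 * Mu2I (2 * ((γᵤw sw + γᵤv sv) / φ₂ tR))) := by
        have d1 : Mu1 (2*D) ≤ Mu1 (2 * Mu2I (2 * Mu3 s0)
            + 2 * Mu2I (2 * ((γᵤw sw + γᵤv sv) / φ₂ tR))) := hMu1.mono (by linarith)
        have d2 := gk_two hMu1 (mul_nonneg (by norm_num : (0:ℝ) ≤ 2) hXnn)
          (mul_nonneg (by norm_num : (0:ℝ) ≤ 2) hYnn2)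
        rw [show (2:ℝ) * (2 * Mu2I (2 * Mu3 s0)) = 4 * Mu2I (2 * Mu3 s0) by ring,
          show (2:ℝ) * (2 * Mu2I (2 * ((γᵤw sw + γᵤv sv) / φ₂ tR)))
            = 4 * Mu2I (2 * ((γᵤw sw + γᵤv sv) / φ₂ tR)) by ring] at d2
        linarith
      have hPwnn : 0 ≤ Pw sw := hPwK.knonneg hsw
      have hPvnn : 0 ≤ Pv sv := hPvK.knonneg hsv
      have c4 : Mu1 (4 * Mu2I (2 * ((γᵤw sw + γᵤv sv) / φ₂ tR))) * φ₁ tR ≤ Pw sw + Pv sv := by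
        rcases le_total (γᵤw sw) (γᵤv sv) with hc | hc
        · have d1 : 2 * ((γᵤw sw + γᵤv sv) / φ₂ tR) ≤ 4 * γᵤv sv / φ₂ tR := by
            rw [show (2:ℝ) * ((γᵤw sw + γᵤv sv) / φ₂ tR)
              = (2 * (γᵤw sw + γᵤv sv)) / φ₂ tR by ring]
            exact (div_le_div_iff_of_pos_right hφ₂t).mpr (by linarith)
          have harg : 0 ≤ 4 * γᵤv sv / φ₂ tR := div_nonneg (by linarith) hφ₂t.le
          have d2 : Mu1 (4 * Mu2I (2 * ((γᵤw sw + γᵤv sv) / φ₂ tR)))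
              ≤ Mu1 (4 * Mu2I (4 * γᵤv sv / φ₂ tR)) := by
            have := hMu2I.mono d1
            exact hMu1.mono (by linarith)
          have d3 : Mu1 (4 * Mu2I (4 * γᵤv sv / φ₂ tR))
              = μ₁ (4 * μ₂inv (4 * γᵤv sv / φ₂ tR)) := by
            rw [hM2agree _ harg, hMu1e _ (by
              have := (hμ₂inv₂ _ harg).2; linarith)]
          have d4 : μ₁ (4 * μ₂inv (4 * γᵤv sv / φ₂ tR)) * φ₁ tR ≤ Pv sv :=
            hPv sv tR hsv htR
          calc Mu1 (4 * Mu2I (2 * ((γᵤw sw + γᵤv sv) / φ₂ tR))) * φ₁ tR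
              ≤ Mu1 (4 * Mu2I (4 * γᵤv sv / φ₂ tR)) * φ₁ tR :=
                mul_le_mul_of_nonneg_right d2 hφ₁t
            _ = μ₁ (4 * μ₂inv (4 * γᵤv sv / φ₂ tR)) * φ₁ tR := by rw [d3]
            _ ≤ Pv sv := d4
            _ ≤ Pw sw + Pv sv := by linarith
        · have d1 : 2 * ((γᵤw sw + γᵤv sv) / φ₂ tR) ≤ 4 * γᵤw sw / φ₂ tR := by
            rw [show (2:ℝ) * ((γᵤw sw + γᵤv sv) / φ₂ tR)
              = (2 * (γᵤw sw + γᵤv sv)) / φ₂ tR by ring]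
            exact (div_le_div_iff_of_pos_right hφ₂t).mpr (by linarith)
          have harg : 0 ≤ 4 * γᵤw sw / φ₂ tR := div_nonneg (by linarith) hφ₂t.le
          have d2 : Mu1 (4 * Mu2I (2 * ((γᵤw sw + γᵤv sv) / φ₂ tR)))
              ≤ Mu1 (4 * Mu2I (4 * γᵤw sw / φ₂ tR)) := by
            have := hMu2I.mono d1
            exact hMu1.mono (by linarith)
          have d3 : Mu1 (4 * Mu2I (4 * γᵤw sw / φ₂ tR))
              = μ₁ (4 * μ₂inv (4 * γᵤw sw / φ₂ tR)) := by
            rw [hM2agree _ harg, hMu1e _ (by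
              have := (hμ₂inv₂ _ harg).2; linarith)]
          have d4 : μ₁ (4 * μ₂inv (4 * γᵤw sw / φ₂ tR)) * φ₁ tR ≤ Pw sw :=
            hPw sw tR hsw htR
          calc Mu1 (4 * Mu2I (2 * ((γᵤw sw + γᵤv sv) / φ₂ tR))) * φ₁ tR
              ≤ Mu1 (4 * Mu2I (4 * γᵤw sw / φ₂ tR)) * φ₁ tR :=
                mul_le_mul_of_nonneg_right d2 hφ₁t
            _ = μ₁ (4 * μ₂inv (4 * γᵤw sw / φ₂ tR)) * φ₁ tR := by rw [d3]
            _ ≤ Pw sw := d4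
            _ ≤ Pw sw + Pv sv := by linarith
      have hB1 : μ₁ Δ * φ₁ tR ≤ (Mu1 (2*s0) + Mu1 (4 * Mu2I (2 * Mu3 s0))) * φ₁ tR
          + (Pw sw + Pv sv) := by
        have k0 : μ₁ Δ = Mu1 Δ := (hMu1e Δ hΔnn).symm
        have t1 : Mu1 Δ * φ₁ tR ≤ (Mu1 (2*s0) + Mu1 (4 * Mu2I (2 * Mu3 s0))
            + Mu1 (4 * Mu2I (2 * ((γᵤw sw + γᵤv sv) / φ₂ tR)))) * φ₁ tR :=
          mul_le_mul_of_nonneg_right (by linarith) hφ₁t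
        have t2 : (Mu1 (2*s0) + Mu1 (4 * Mu2I (2 * Mu3 s0))
            + Mu1 (4 * Mu2I (2 * ((γᵤw sw + γᵤv sv) / φ₂ tR)))) * φ₁ tR
            = (Mu1 (2*s0) + Mu1 (4 * Mu2I (2 * Mu3 s0))) * φ₁ tR
            + Mu1 (4 * Mu2I (2 * ((γᵤw sw + γᵤv sv) / φ₂ tR))) * φ₁ tR := by ring
        rw [k0]
        linarith
      -- Term 2 (the process-noise term)
      have w0 : 0 ≤ GlwI (3 * (Mu3 s0 * φ₂ tR)) :=
        hGlwI.nonneg (mul_nonneg (by norm_num) (mul_nonneg hMu3nn hφ₂t.le))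
      have w1 : 0 ≤ GlwI (3 * Guw sw) := hGlwI.nonneg (by linarith)
      have w2 : 0 ≤ GlwI (3 * Guv sv) := hGlwI.nonneg (by linarith)
      have q3 : GlwI R ≤ GlwI (3 * (Mu3 s0 * φ₂ tR)) + GlwI (3 * Guw sw)
          + GlwI (3 * Guv sv) := by
        have := gk_three hGlwI (mul_nonneg hMu3nn hφ₂t.le) hGuwnn hGuvnn
        rwa [← hR'] at this
      have q5 : A1 (2 * GlwI R) ≤ A1 (6 * GlwI (3 * (Mu3 s0 * φ₂ tR)))
          + A1 (6 * GlwI (3 * Guw sw)) + A1 (6 * GlwI (3 * Guv sv)) := by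
        have g1 := gk_three hA1 (mul_nonneg (by norm_num : (0:ℝ) ≤ 2) w0)
          (mul_nonneg (by norm_num : (0:ℝ) ≤ 2) w1)
          (mul_nonneg (by norm_num : (0:ℝ) ≤ 2) w2)
        rw [show (3:ℝ) * (2 * GlwI (3 * (Mu3 s0 * φ₂ tR)))
              = 6 * GlwI (3 * (Mu3 s0 * φ₂ tR)) by ring,
          show (3:ℝ) * (2 * GlwI (3 * Guw sw)) = 6 * GlwI (3 * Guw sw) by ring,
          show (3:ℝ) * (2 * GlwI (3 * Guv sv)) = 6 * GlwI (3 * Guv sv) by ring] at g1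
        have g2 : A1 (2 * GlwI R) ≤ A1 (2 * GlwI (3 * (Mu3 s0 * φ₂ tR))
            + 2 * GlwI (3 * Guw sw) + 2 * GlwI (3 * Guv sv)) := hA1.mono (by linarith)
        linarith
      have hB2 : α₁ W ≤ A1 (2*sw) + (A1 (6 * GlwI (3 * (Mu3 s0 * φ₂ tR)))
          + A1 (6 * GlwI (3 * Guw sw)) + A1 (6 * GlwI (3 * Guv sv))) := by
        have k0 : α₁ W = A1 W := (hA1e W hWnn).symm
        have t1 : A1 W ≤ A1 (2*sw) + A1 (2*Sw) :=
          le_trans (hA1.mono hW) (gk_two hA1 hsw hSw)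
        have t2 : A1 (2*Sw) ≤ A1 (2 * GlwI R) := hA1.mono (by linarith)
        rw [k0]
        linarith
      -- Term 3 (the measurement-noise term)
      have z0 : 0 ≤ GlvI (3 * (Mu3 s0 * φ₂ tR)) :=
        hGlvI.nonneg (mul_nonneg (by norm_num) (mul_nonneg hMu3nn hφ₂t.le))
      have z1 : 0 ≤ GlvI (3 * Guw sw) := hGlvI.nonneg (by linarith)
      have z2 : 0 ≤ GlvI (3 * Guv sv) := hGlvI.nonneg (by linarith)
      have r3 : GlvI R ≤ GlvI (3 * (Mu3 s0 * φ₂ tR)) + GlvI (3 * Guw sw)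
          + GlvI (3 * Guv sv) := by
        have := gk_three hGlvI (mul_nonneg hMu3nn hφ₂t.le) hGuwnn hGuvnn
        rwa [← hR'] at this
      have r5 : A2 (2 * GlvI R) ≤ A2 (6 * GlvI (3 * (Mu3 s0 * φ₂ tR)))
          + A2 (6 * GlvI (3 * Guw sw)) + A2 (6 * GlvI (3 * Guv sv)) := by
        have g1 := gk_three hA2 (mul_nonneg (by norm_num : (0:ℝ) ≤ 2) z0)
          (mul_nonneg (by norm_num : (0:ℝ) ≤ 2) z1)
          (mul_nonneg (by norm_num : (0:ℝ) ≤ 2) z2)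
        rw [show (3:ℝ) * (2 * GlvI (3 * (Mu3 s0 * φ₂ tR)))
              = 6 * GlvI (3 * (Mu3 s0 * φ₂ tR)) by ring,
          show (3:ℝ) * (2 * GlvI (3 * Guw sw)) = 6 * GlvI (3 * Guw sw) by ring,
          show (3:ℝ) * (2 * GlvI (3 * Guv sv)) = 6 * GlvI (3 * Guv sv) by ring] at g1
        have g2 : A2 (2 * GlvI R) ≤ A2 (2 * GlvI (3 * (Mu3 s0 * φ₂ tR))
            + 2 * GlvI (3 * Guw sw) + 2 * GlvI (3 * Guv sv)) := hA2.mono (by linarith)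
        linarith
      have hB3 : α₂ Y ≤ A2 (2*sv) + (A2 (6 * GlvI (3 * (Mu3 s0 * φ₂ tR)))
          + A2 (6 * GlvI (3 * Guw sw)) + A2 (6 * GlvI (3 * Guv sv))) := by
        have k0 : α₂ Y = A2 Y := (hA2e Y hYnn).symm
        have t1 : A2 Y ≤ A2 (2*Sv) + A2 (2*sv) :=
          le_trans (hA2.mono hY) (gk_two hA2 hSv hsv)
        have t2 : A2 (2*Sv) ≤ A2 (2 * GlvI R) := hA2.mono (by linarith)
        rw [k0]
        linarith
      linarith
    -- instantiate the arithmetic core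
    have hveq : (fun i => h (traj f x0 w i) + v i - h (traj f x0 w i)) = v := by
      funext i; exact add_sub_cancel_left _ _
    have hup' := (hV t x0 w).2
    rw [hveq] at hup'
    have hR0 : μ₂ ‖xhat0 t - xbar0‖ * φ₂ (t:ℝ) + γₗw (seqSup (what t) t)
        + γₗv (seqSup (fun i => h (traj f x0 w i) + v i
            - h (traj f (xhat0 t) (what t) i)) (t+1))
        ≤ μ₃ ‖x0 - xbar0‖ * φ₂ (t:ℝ) + γᵤw (seqSup w t) + γᵤv (seqSup v (t+1)) :=
      le_trans (hV t (xhat0 t) (what t)).1 (le_trans (hopt t) hup')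
    have hΔb : ‖x0 - xhat0 t‖ ≤ ‖x0 - xbar0‖ + ‖xhat0 t - xbar0‖ := by
      calc ‖x0 - xhat0 t‖ = ‖(x0 - xbar0) + (xbar0 - xhat0 t)‖ := by
            rw [sub_add_sub_cancel]
        _ ≤ ‖x0 - xbar0‖ + ‖xbar0 - xhat0 t‖ := norm_add_le _ _
        _ = ‖x0 - xbar0‖ + ‖xhat0 t - xbar0‖ := by rw [norm_sub_rev xbar0 (xhat0 t)]
    have hWb : seqSup (fun i => w i - what t i) t ≤ seqSup w t + seqSup (what t) t :=
      seqSup_sub_le w (what t) t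
    have hYb : seqSup (fun i => h (traj f x0 w i) - h (traj f (xhat0 t) (what t) i)) (t+1)
        ≤ seqSup (fun i => h (traj f x0 w i) + v i
            - h (traj f (xhat0 t) (what t) i)) (t+1) + seqSup v (t+1) := by
      have q8 : (fun i => h (traj f x0 w i) - h (traj f (xhat0 t) (what t) i))
          = fun i => (h (traj f x0 w i) + v i - h (traj f (xhat0 t) (what t) i)) - v i := by
        funext i; abel
      rw [q8]
      exact seqSup_sub_le
        (fun i => h (traj f x0 w i) + v i - h (traj f (xhat0 t) (what t) i)) v (t+1)
    exact key ‖x0 - xbar0‖ ‖xhat0 t - xbar0‖ (seqSup w t) (seqSup v (t+1))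
      (seqSup (what t) t)
      (seqSup (fun i => h (traj f x0 w i) + v i - h (traj f (xhat0 t) (what t) i)) (t+1))
      ‖x0 - xhat0 t‖ (seqSup (fun i => w i - what t i) t)
      (seqSup (fun i => h (traj f x0 w i) - h (traj f (xhat0 t) (what t) i)) (t+1))
      ‖traj f x0 w t - traj f (xhat0 t) (what t) t‖ (t:ℝ)
      (norm_nonneg _) (norm_nonneg _) (seqSup_nonneg _ _) (seqSup_nonneg _ _)
      (seqSup_nonneg _ _) (seqSup_nonneg _ _) (norm_nonneg _) (seqSup_nonneg _ _)
      (seqSup_nonneg _ _) (Nat.cast_nonneg t)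
      hR0 hΔb hWb hYb (hIOSS x0 (xhat0 t) w (what t) t)
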